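/- arXiv:2304.07157 — 3 statements merged into one kernel-verified Lean document; each statement's English description precedes it below -/
import Mathlib

section
/- If L is a switched combination of two orthogonal latin squares A₀ and A₁ of order n, then any K_{3,3} pattern in L occupies six distinct 2×2 blocks; i.e., no two of its six cells lie in the same block. -/
/-- A latin square of order `n` as a function: each row and each column is injective. -/
def IsLatin {n : ℕ} (A : Fin n → Fin n → Fin n) : Prop :=
  (∀ r, Function.Injective (A r)) ∧ (∀ c, Function.Injective (fun r => A r c))

/-- The block coordinate of a row or column index. -/
def blk {n : ℕ} (i : Fin (2 * n)) : Fin n :=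
  ⟨i.val / 2, by have := i.isLt; omega⟩

/-- The switched combination of two latin squares `A₀`, `A₁` of order `n` with switching
matrix `S`: letters of `A₀` are embedded as even numbers and letters of `A₁` as odd numbers,
and `L(i,j) = A_ε(⌊i/2⌋,⌊j/2⌋)` where `ε = 1` iff `i + j + S(⌊i/2⌋,⌊j/2⌋) ≡ 0 (mod 2)`. -/
def comb {n : ℕ} (A0 A1 : Fin n → Fin n → Fin n) (S : Fin n → Fin n → ZMod 2)
    (i j : Fin (2 * n)) : ℕ :=
  if ((i.val : ZMod 2) + (j.val : ZMod 2) + S (blk i) (blk j) = 0)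
    then 2 * (A1 (blk i) (blk j)).val + 1
    else 2 * (A0 (blk i) (blk j)).val

lemma three_blk {n : ℕ} {i j k : Fin (2 * n)} (hij : i ≠ j) (hik : i ≠ k) (hjk : j ≠ k)
    (e1 : blk i = blk j) (e2 : blk i = blk k) : False := by
  have d1 : i.val / 2 = j.val / 2 := congrArg Fin.val e1
  have d2 : i.val / 2 = k.val / 2 := congrArg Fin.val e2
  have n1 : i.val ≠ j.val := fun h => hij (Fin.ext h)
  have n2 : i.val ≠ k.val := fun h => hik (Fin.ext h)
  have n3 : j.val ≠ k.val := fun h => hjk (Fin.ext h)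
  omega

lemma blk_parity {n : ℕ} {i j : Fin (2 * n)} (h : blk i = blk j) (hne : i ≠ j) :
    (i.val : ZMod 2) + (j.val : ZMod 2) = 1 := by
  have e : i.val / 2 = j.val / 2 := congrArg Fin.val h
  have ne : i.val ≠ j.val := fun hh => hne (Fin.ext hh)
  have hm : (i.val + j.val) % 2 = 1 := by omega
  calc (i.val : ZMod 2) + (j.val : ZMod 2) = ((i.val + j.val : ℕ) : ZMod 2) := by push_cast; ring
    _ = (((i.val + j.val) % 2 : ℕ) : ZMod 2) := (ZMod.natCast_mod _ 2).symm
    _ = 1 := by rw [hm]; norm_num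

lemma zmod2_flip : ∀ x y c s : ZMod 2, x + y = 1 → ((x + c + s = 0) ↔ ¬(y + c + s = 0)) := by
  decide

lemma zmod2_flip' : ∀ x y c s : ZMod 2, x + y = 1 → ((c + x + s = 0) ↔ ¬(c + y + s = 0)) := by
  decide

lemma comb_eq_elim {n : ℕ} (A0 A1 : Fin n → Fin n → Fin n) (S : Fin n → Fin n → ZMod 2)
    {i j i' j' : Fin (2 * n)} (h : comb A0 A1 S i j = comb A0 A1 S i' j') :
    (((i.val : ZMod 2) + (j.val : ZMod 2) + S (blk i) (blk j) = 0) ↔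
      ((i'.val : ZMod 2) + (j'.val : ZMod 2) + S (blk i') (blk j') = 0)) ∧
    (((i.val : ZMod 2) + (j.val : ZMod 2) + S (blk i) (blk j) = 0) →
      A1 (blk i) (blk j) = A1 (blk i') (blk j')) ∧
    (¬((i.val : ZMod 2) + (j.val : ZMod 2) + S (blk i) (blk j) = 0) →
      A0 (blk i) (blk j) = A0 (blk i') (blk j')) := by
  unfold comb at h
  split_ifs at h with hp hq hq
  · exact ⟨iff_of_true hp hq, fun _ => Fin.ext (by omega), fun hc => absurd hp hc⟩
  · omega
  · omega
  · exact ⟨iff_of_false hp hq, fun hc => absurd hc hp, fun _ => Fin.ext (by omega)⟩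

lemma comb_eq_or {n : ℕ} (A0 A1 : Fin n → Fin n → Fin n) (S : Fin n → Fin n → ZMod 2)
    {i j i' j' : Fin (2 * n)} (h : comb A0 A1 S i j = comb A0 A1 S i' j') :
    A0 (blk i) (blk j) = A0 (blk i') (blk j') ∨ A1 (blk i) (blk j) = A1 (blk i') (blk j') := by
  obtain ⟨p, a1, a0⟩ := comb_eq_elim A0 A1 S h
  by_cases hp : ((i.val : ZMod 2) + (j.val : ZMod 2) + S (blk i) (blk j) = 0)
  · exact Or.inr (a1 hp)
  · exact Or.inl (a0 hp)

/-- In a switched combination of two *orthogonal* latin squares, any `K_{3,3}` pattern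
occupies six distinct blocks. -/
theorem stmt9 {n : ℕ} (A0 A1 : Fin n → Fin n → Fin n)
    (hA0 : IsLatin A0) (hA1 : IsLatin A1)
    (horth : Function.Injective (fun p : Fin n × Fin n => (A0 p.1 p.2, A1 p.1 p.2)))
    (S : Fin n → Fin n → ZMod 2)
    (r1 r2 r3 c1 c2 c3 : Fin (2 * n))
    (hr : r1 ≠ r2 ∧ r1 ≠ r3 ∧ r2 ≠ r3) (hc : c1 ≠ c2 ∧ c1 ≠ c3 ∧ c2 ≠ c3)
    (h1 : comb A0 A1 S r1 c2 = comb A0 A1 S r2 c1)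
    (h2 : comb A0 A1 S r2 c3 = comb A0 A1 S r3 c2)
    (h3 : comb A0 A1 S r3 c1 = comb A0 A1 S r1 c3) :
    ([(blk r1, blk c2), (blk r2, blk c3), (blk r3, blk c1),
      (blk r2, blk c1), (blk r3, blk c2), (blk r1, blk c3)] :
      List (Fin n × Fin n)).Nodup := by
  obtain ⟨hr12, hr13, hr23⟩ := hr
  obtain ⟨hc12, hc13, hc23⟩ := hc
  have rowinj : ∀ {b d d' : Fin n}, (A0 b d = A0 b d' ∨ A1 b d = A1 b d') → d = d' :=
    fun h => h.elim (fun h => hA0.1 _ h) (fun h => hA1.1 _ h)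
  have colinj : ∀ {b b' d : Fin n}, (A0 b d = A0 b' d ∨ A1 b d = A1 b' d) → b = b' :=
    fun h => h.elim (fun h => hA0.2 _ h) (fun h => hA1.2 _ h)
  have orth : ∀ {b b' d d' : Fin n}, A0 b d = A0 b' d' → A1 b d = A1 b' d' →
      b = b' ∧ d = d' := by
    intro b b' d d' h0 h4
    have heq : ((b, d) : Fin n × Fin n) = (b', d') :=
      horth (show (A0 b d, A1 b d) = (A0 b' d', A1 b' d') by rw [h0, h4])
    exact ⟨congrArg Prod.fst heq, congrArg Prod.snd heq⟩
  have hRall : blk r1 = blk r2 → blk r1 = blk r3 → False :=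
    fun a b => three_blk hr12 hr13 hr23 a b
  have hCall : blk c1 = blk c2 → blk c1 = blk c3 → False :=
    fun a b => three_blk hc12 hc13 hc23 a b
  have hrow1 : blk r1 = blk r2 → blk c2 = blk c1 := fun hb =>
    rowinj (by have o := comb_eq_or A0 A1 S h1; rwa [← hb] at o)
  have hcol1 : blk c2 = blk c1 → blk r1 = blk r2 := fun hd =>
    colinj (by have o := comb_eq_or A0 A1 S h1; rwa [← hd] at o)
  have hrow2 : blk r2 = blk r3 → blk c3 = blk c2 := fun hb =>
    rowinj (by have o := comb_eq_or A0 A1 S h2; rwa [← hb] at o)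
  have hcol2 : blk c3 = blk c2 → blk r2 = blk r3 := fun hd =>
    colinj (by have o := comb_eq_or A0 A1 S h2; rwa [← hd] at o)
  have hrow3 : blk r3 = blk r1 → blk c1 = blk c3 := fun hb =>
    rowinj (by have o := comb_eq_or A0 A1 S h3; rwa [← hb] at o)
  have hcol3 : blk c1 = blk c3 → blk r3 = blk r1 := fun hd =>
    colinj (by have o := comb_eq_or A0 A1 S h3; rwa [← hd] at o)
  -- State X : rows 1,2 and columns 1,2 share blocks
  have hX : blk r1 = blk r2 → blk c1 = blk c2 → False := by
    intro hb hd
    have k2 := comb_eq_elim A0 A1 S h2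
    rw [← hb, ← hd] at k2
    obtain ⟨k2p, k2a1, k2a0⟩ := k2
    obtain ⟨k3p, k3a1, k3a0⟩ := comb_eq_elim A0 A1 S h3
    have hpar : (r2.val : ZMod 2) + (r1.val : ZMod 2) = 1 := by
      rw [add_comm]; exact blk_parity hb hr12
    have hiff : ((r2.val : ZMod 2) + (c3.val : ZMod 2) + S (blk r1) (blk c3) = 0) ↔
        ¬((r3.val : ZMod 2) + (c1.val : ZMod 2) + S (blk r3) (blk c1) = 0) := by
      rw [k3p]; exact zmod2_flip _ _ _ _ hpar
    by_cases hQ : ((r2.val : ZMod 2) + (c3.val : ZMod 2) + S (blk r1) (blk c3) = 0)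
    · have hA1e := k2a1 hQ
      have hA0e := k3a0 (hiff.mp hQ)
      exact hRall hb (orth hA0e.symm hA1e).1
    · have hA0e := k2a0 hQ
      have hP3 : ((r3.val : ZMod 2) + (c1.val : ZMod 2) + S (blk r3) (blk c1) = 0) := by
        by_contra hcn; exact hQ (hiff.mpr hcn)
      have hA1e := k3a1 hP3
      exact hRall hb (orth hA0e hA1e.symm).1
  -- State Y : rows 1,3 and columns 1,3 share blocks
  have hY : blk r1 = blk r3 → blk c1 = blk c3 → False := by
    intro hb hd
    obtain ⟨k1p, k1a1, k1a0⟩ := comb_eq_elim A0 A1 S h1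
    have k2 := comb_eq_elim A0 A1 S h2
    rw [← hb, ← hd] at k2
    obtain ⟨k2p, k2a1, k2a0⟩ := k2
    have hpar : (c1.val : ZMod 2) + (c3.val : ZMod 2) = 1 := blk_parity hd hc13
    have hiff : ((r1.val : ZMod 2) + (c2.val : ZMod 2) + S (blk r1) (blk c2) = 0) ↔
        ¬((r2.val : ZMod 2) + (c3.val : ZMod 2) + S (blk r2) (blk c1) = 0) := by
      rw [k1p]; exact zmod2_flip' _ _ _ _ hpar
    by_cases hQ : ((r1.val : ZMod 2) + (c2.val : ZMod 2) + S (blk r1) (blk c2) = 0)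
    · have hA1e := k1a1 hQ
      have hA0e := k2a0 (hiff.mp hQ)
      exact hCall (orth hA0e.symm hA1e).2.symm hd
    · have hA0e := k1a0 hQ
      have hP2 : ((r2.val : ZMod 2) + (c3.val : ZMod 2) + S (blk r2) (blk c1) = 0) := by
        by_contra hcn; exact hQ (hiff.mpr hcn)
      have hA1e := k2a1 hP2
      exact hCall (orth hA0e hA1e.symm).2.symm hd
  -- State Z : rows 2,3 and columns 2,3 share blocks
  have hZ : blk r2 = blk r3 → blk c2 = blk c3 → False := by
    intro hb hd
    obtain ⟨k1p, k1a1, k1a0⟩ := comb_eq_elim A0 A1 S h1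
    have k3 := comb_eq_elim A0 A1 S h3
    rw [← hb, ← hd] at k3
    obtain ⟨k3p, k3a1, k3a0⟩ := k3
    have hpar : (c2.val : ZMod 2) + (c3.val : ZMod 2) = 1 := blk_parity hd hc23
    have hiff : ((r1.val : ZMod 2) + (c2.val : ZMod 2) + S (blk r1) (blk c2) = 0) ↔
        ¬((r3.val : ZMod 2) + (c1.val : ZMod 2) + S (blk r2) (blk c1) = 0) := by
      rw [k3p]; exact zmod2_flip' _ _ _ _ hpar
    by_cases hQ : ((r1.val : ZMod 2) + (c2.val : ZMod 2) + S (blk r1) (blk c2) = 0)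
    · have hA1e := k1a1 hQ
      have hA0e := k3a0 (hiff.mp hQ)
      exact hRall (orth hA0e.symm hA1e).1 ((orth hA0e.symm hA1e).1.trans hb)
    · have hA0e := k1a0 hQ
      have hP3 : ((r3.val : ZMod 2) + (c1.val : ZMod 2) + S (blk r2) (blk c1) = 0) := by
        by_contra hcn; exact hQ (hiff.mpr hcn)
      have hA1e := k3a1 hP3
      exact hRall (orth hA0e hA1e.symm).1 ((orth hA0e hA1e.symm).1.trans hb)
  simp only [List.nodup_cons, List.mem_cons, List.mem_singleton, List.not_mem_nil, or_false,
    List.nodup_nil, and_true, true_and, Prod.mk.injEq, not_or]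
  refine ⟨⟨?_, ?_, ?_, ?_, ?_⟩, ⟨?_, ?_, ?_, ?_⟩, ⟨?_, ?_, ?_⟩, ⟨?_, ?_⟩, ?_, not_false⟩
  · rintro ⟨hb, hd⟩; exact hCall (hrow1 hb).symm ((hrow1 hb).symm.trans hd)
  · rintro ⟨hb, hd⟩; exact hRall (hcol1 hd) hb
  · rintro ⟨hb, hd⟩; exact hX hb hd.symm
  · intro hb; exact hY hb (hrow3 hb.symm)
  · intro hd; exact hZ (hcol2 hd.symm) hd
  · rintro ⟨hb, hd⟩; exact hCall (hd.symm.trans (hrow2 hb)) hd.symm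
  · intro hd; exact hY (hcol3 hd.symm).symm hd.symm
  · rintro ⟨hb, hd⟩; exact hZ hb hd.symm
  · intro hb; exact hX hb.symm (hrow1 hb.symm).symm
  · intro hb; exact hZ hb.symm (hrow2 hb.symm).symm
  · intro hd; exact hX (hcol1 hd.symm) hd
  · rintro ⟨hb, hd⟩; exact hY hb.symm hd
  · rintro ⟨hb, hd⟩; exact hCall hd (hd.trans (hrow2 hb).symm)
  · rintro ⟨hb, hd⟩; exact hCall (hrow1 hb.symm).symm hd
  · rintro ⟨hb, hd⟩; exact hCall ((hrow3 hb).trans hd.symm) (hrow3 hb)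
end

section
/- If A₀ and A₁ are non-orthogonal latin squares of order n, then every switched combination L of A₀ and A₁ contains a K_{3,3} pattern located in just 3 blocks. -/
/-- A switched combination of two *non-orthogonal* latin squares always contains a
`K_{3,3}` pattern located in just 3 blocks. -/
theorem stmt10 {n : ℕ} (A0 A1 : Fin n → Fin n → Fin n)
    (hA0 : IsLatin A0) (hA1 : IsLatin A1)
    (hnotorth : ¬ Function.Injective (fun p : Fin n × Fin n => (A0 p.1 p.2, A1 p.1 p.2)))
    (S : Fin n → Fin n → ZMod 2) :
    ∃ r1 r2 r3 c1 c2 c3 : Fin (2 * n),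
      r1 ≠ r2 ∧ r1 ≠ r3 ∧ r2 ≠ r3 ∧ c1 ≠ c2 ∧ c1 ≠ c3 ∧ c2 ≠ c3 ∧
      comb A0 A1 S r1 c2 = comb A0 A1 S r2 c1 ∧
      comb A0 A1 S r2 c3 = comb A0 A1 S r3 c2 ∧
      comb A0 A1 S r3 c1 = comb A0 A1 S r1 c3 ∧
      ([(blk r1, blk c2), (blk r2, blk c3), (blk r3, blk c1),
        (blk r2, blk c1), (blk r3, blk c2), (blk r1, blk c3)] :
        List (Fin n × Fin n)).toFinset.card = 3 := by
  rw [Function.not_injective_iff] at hnotorth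
  obtain ⟨⟨r, c⟩, ⟨r', c'⟩, heq, hne⟩ := hnotorth
  simp only [Prod.mk.injEq] at heq
  obtain ⟨h0, h1⟩ := heq
  have hr : r ≠ r' := by
    rintro rfl
    exact hne (by rw [hA0.1 r h0])
  have hc : c ≠ c' := by
    rintro rfl
    exact hne (by rw [hA0.2 c h0])
  have hv : (S r c + S r' c').val < 2 := ZMod.val_lt _
  have hrn := r.isLt; have hrn' := r'.isLt; have hcn := c.isLt; have hcn' := c'.isLt
  obtain ⟨r1, hr1⟩ : ∃ x : Fin (2*n), x.val = 2*r.val := ⟨⟨_, by omega⟩, rfl⟩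
  obtain ⟨r2, hr2⟩ : ∃ x : Fin (2*n), x.val = 2*r.val + 1 := ⟨⟨_, by omega⟩, rfl⟩
  obtain ⟨r3, hr3⟩ : ∃ x : Fin (2*n), x.val = 2*r'.val + (S r c + S r' c').val :=
    ⟨⟨_, by omega⟩, rfl⟩
  obtain ⟨c1, hc1⟩ : ∃ x : Fin (2*n), x.val = 2*c'.val := ⟨⟨_, by omega⟩, rfl⟩
  obtain ⟨c2, hc2⟩ : ∃ x : Fin (2*n), x.val = 2*c'.val + 1 := ⟨⟨_, by omega⟩, rfl⟩
  obtain ⟨c3, hc3⟩ : ∃ x : Fin (2*n), x.val = 2*c.val := ⟨⟨_, by omega⟩, rfl⟩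
  have hrv : r.val ≠ r'.val := fun h => hr (Fin.ext h)
  have hcv : c.val ≠ c'.val := fun h => hc (Fin.ext h)
  have hb1 : blk r1 = r := by apply Fin.ext; show r1.val / 2 = r.val; omega
  have hb2 : blk r2 = r := by apply Fin.ext; show r2.val / 2 = r.val; omega
  have hb3 : blk r3 = r' := by apply Fin.ext; show r3.val / 2 = r'.val; omega
  have hb4 : blk c1 = c' := by apply Fin.ext; show c1.val / 2 = c'.val; omega
  have hb5 : blk c2 = c' := by apply Fin.ext; show c2.val / 2 = c'.val; omega
  have hb6 : blk c3 = c := by apply Fin.ext; show c3.val / 2 = c.val; omega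
  have e0 : ∀ m:ℕ, ((2*m : ℕ) : ZMod 2) = 0 := by
    intro m; push_cast; rw [show (2:ZMod 2) = 0 by decide]; ring
  have e1 : ∀ m:ℕ, ((2*m+1 : ℕ) : ZMod 2) = 1 := by
    intro m; push_cast; rw [show (2:ZMod 2) = 0 by decide]; ring
  have e2 : ∀ (m:ℕ) (x : ZMod 2), ((2*m + x.val : ℕ) : ZMod 2) = x := by
    intro m x; push_cast [ZMod.natCast_val, ZMod.cast_id]
    rw [show (2:ZMod 2) = 0 by decide]; ring
  refine ⟨r1, r2, r3, c1, c2, c3, ?_, ?_, ?_, ?_, ?_, ?_, ?_, ?_, ?_, ?_⟩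
  · intro h; have := congrArg Fin.val h; omega
  · intro h; have := congrArg Fin.val h; omega
  · intro h; have := congrArg Fin.val h; omega
  · intro h; have := congrArg Fin.val h; omega
  · intro h; have := congrArg Fin.val h; omega
  · intro h; have := congrArg Fin.val h; omega
  · -- eq1
    simp only [comb, hb1, hb2, hb4, hb5, hr1, hr2, hc1, hc2, e0, e1]
    apply if_congr _ rfl rfl
    constructor <;> intro h <;> linear_combination h
  · -- eq2
    simp only [comb, hb2, hb3, hb5, hb6, hr2, hr3, hc2, hc3, e0, e1, e2, h0, h1]
    have h2 : (2 : ZMod 2) = 0 := by decide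
    apply if_congr _ rfl rfl
    constructor <;> intro h <;>
      first
        | linear_combination h + S r' c' * h2
        | linear_combination h - S r' c' * h2
  · -- eq3
    simp only [comb, hb1, hb3, hb4, hb6, hr1, hr3, hc1, hc3, e0, e1, e2, h0, h1]
    have h2 : (2 : ZMod 2) = 0 := by decide
    apply if_congr _ rfl rfl
    constructor <;> intro h <;>
      first
        | linear_combination h + S r' c' * h2
        | linear_combination h - S r' c' * h2
  · rw [hb1, hb2, hb3, hb4, hb5, hb6]
    rw [show ([(r, c'), (r, c), (r', c'), (r, c'), (r', c'), (r, c)] :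
        List (Fin n × Fin n)).toFinset = {(r, c'), (r, c), (r', c')} by
      simp [List.toFinset_cons]; ext x; simp; tauto]
    rw [Finset.card_insert_of_notMem (by simp [Prod.ext_iff]; tauto),
      Finset.card_insert_of_notMem (by simp [Prod.ext_iff]; tauto),
      Finset.card_singleton]
end

section
/- If a switched combination of two latin squares contains a K_{3,3} pattern located in six distinct blocks, then the switching matrix has an even number of ones in the six positions corresponding to those blocks; moreover, for any other switching matrix with an even number of ones in those six positions, the resulting switched combination of the same two squares has a K_{3,3} pattern in the corresponding six blocks. -/
lemma zmod2_ne : ∀ x y : ZMod 2, x ≠ 0 → y ≠ 0 → x = y := by decide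

lemma part1key : ∀ (x1 x2 x3 y1 y2 y3 s12 s23 s31 s21 s32 s13 : ZMod 2),
    x1+y2+s12 = x2+y1+s21 → x2+y3+s23 = x3+y2+s32 → x3+y1+s31 = x1+y3+s13 →
    s12+s23+s31+s21+s32+s13 = 0 := by decide

lemma sixsolve : ∀ (a12 a23 a31 a21 a32 a13 : ZMod 2),
    a12+a23+a31+a21+a32+a13 = 0 →
    ∃ d1 d2 d3 e1 e2 e3 : ZMod 2, d1+e2 = a12 ∧ d2+e3 = a23 ∧ d3+e1 = a31 ∧
      d2+e1 = a21 ∧ d3+e2 = a32 ∧ d1+e3 = a13 := by decide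

lemma cellEq : ∀ (r c d e s s' : ZMod 2), d + e = s' + s → r + d + (c + e) + s' = r + c + s := by
  decide

def mkF {n : ℕ} (b : Fin n) (p : ZMod 2) : Fin (2 * n) :=
  ⟨2 * b.val + p.val, by have := b.isLt; have := ZMod.val_lt p; omega⟩

lemma blk_mk {n : ℕ} (b : Fin n) (p : ZMod 2) : blk (mkF b p) = b := by
  apply Fin.ext; show (2 * b.val + p.val) / 2 = b.val
  have := ZMod.val_lt p; omega

lemma val_mk {n : ℕ} (b : Fin n) (p : ZMod 2) : (((mkF b p).val : ℕ) : ZMod 2) = p := by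
  show ((2 * b.val + p.val : ℕ) : ZMod 2) = p
  push_cast
  rw [ZMod.natCast_val, ZMod.cast_id, show (2 : ZMod 2) = 0 by decide]
  ring

lemma condEq {n : ℕ} (A0 A1 : Fin n → Fin n → Fin n) (S : Fin n → Fin n → ZMod 2)
    {i j i' j' : Fin (2*n)} (h : comb A0 A1 S i j = comb A0 A1 S i' j') :
    ((i.val : ZMod 2) + (j.val : ZMod 2) + S (blk i) (blk j)) =
      ((i'.val : ZMod 2) + (j'.val : ZMod 2) + S (blk i') (blk j')) := by
  unfold comb at h
  split_ifs at h with hA hB hB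
  · rw [hA, hB]
  · omega
  · omega
  · exact zmod2_ne _ _ hA hB

lemma comb_congr {n : ℕ} (A0 A1 : Fin n → Fin n → Fin n) (S S' : Fin n → Fin n → ZMod 2)
    {i j i' j' : Fin (2*n)} (hbi : blk i' = blk i) (hbj : blk j' = blk j)
    (hc : ((i'.val : ZMod 2) + (j'.val : ZMod 2) + S' (blk i) (blk j)) =
      ((i.val : ZMod 2) + (j.val : ZMod 2) + S (blk i) (blk j))) :
    comb A0 A1 S' i' j' = comb A0 A1 S i j := by
  unfold comb
  rw [hbi, hbj, hc]

/-- If a switched combination of two latin squares contains a `K_{3,3}` pattern located in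
six distinct blocks, then the switching matrix has an even number of ones in the six
corresponding positions; moreover, any other switching matrix with an even number of ones
in those six positions gives a combination with a `K_{3,3}` pattern in those six blocks. -/
theorem stmt11 {n : ℕ} (A0 A1 : Fin n → Fin n → Fin n)
    (hA0 : IsLatin A0) (hA1 : IsLatin A1)
    (S : Fin n → Fin n → ZMod 2)
    (r1 r2 r3 c1 c2 c3 : Fin (2 * n))
    (hr : r1 ≠ r2 ∧ r1 ≠ r3 ∧ r2 ≠ r3) (hc : c1 ≠ c2 ∧ c1 ≠ c3 ∧ c2 ≠ c3)
    (h1 : comb A0 A1 S r1 c2 = comb A0 A1 S r2 c1)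
    (h2 : comb A0 A1 S r2 c3 = comb A0 A1 S r3 c2)
    (h3 : comb A0 A1 S r3 c1 = comb A0 A1 S r1 c3)
    (hblocks : ([(blk r1, blk c2), (blk r2, blk c3), (blk r3, blk c1),
      (blk r2, blk c1), (blk r3, blk c2), (blk r1, blk c3)] :
      List (Fin n × Fin n)).Nodup) :
    (S (blk r1) (blk c2) + S (blk r2) (blk c3) + S (blk r3) (blk c1) +
      S (blk r2) (blk c1) + S (blk r3) (blk c2) + S (blk r1) (blk c3) = 0) ∧
    (∀ S' : Fin n → Fin n → ZMod 2,
      S' (blk r1) (blk c2) + S' (blk r2) (blk c3) + S' (blk r3) (blk c1) +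
        S' (blk r2) (blk c1) + S' (blk r3) (blk c2) + S' (blk r1) (blk c3) = 0 →
      ∃ r1' r2' r3' c1' c2' c3' : Fin (2 * n),
        blk r1' = blk r1 ∧ blk r2' = blk r2 ∧ blk r3' = blk r3 ∧
        blk c1' = blk c1 ∧ blk c2' = blk c2 ∧ blk c3' = blk c3 ∧
        r1' ≠ r2' ∧ r1' ≠ r3' ∧ r2' ≠ r3' ∧ c1' ≠ c2' ∧ c1' ≠ c3' ∧ c2' ≠ c3' ∧
        comb A0 A1 S' r1' c2' = comb A0 A1 S' r2' c1' ∧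
        comb A0 A1 S' r2' c3' = comb A0 A1 S' r3' c2' ∧
        comb A0 A1 S' r3' c1' = comb A0 A1 S' r1' c3') := by
  have e1 := condEq A0 A1 S h1
  have e2 := condEq A0 A1 S h2
  have e3 := condEq A0 A1 S h3
  have key1 := part1key (r1.val : ZMod 2) (r2.val : ZMod 2) (r3.val : ZMod 2)
    (c1.val : ZMod 2) (c2.val : ZMod 2) (c3.val : ZMod 2)
    (S (blk r1) (blk c2)) (S (blk r2) (blk c3)) (S (blk r3) (blk c1))
    (S (blk r2) (blk c1)) (S (blk r3) (blk c2)) (S (blk r1) (blk c3)) e1 e2 e3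
  -- block distinctness
  have hb12 : blk r1 ≠ blk r2 := by intro h; rw [h] at hblocks; simp at hblocks
  have hb13 : blk r1 ≠ blk r3 := by intro h; rw [h] at hblocks; simp at hblocks
  have hb23 : blk r2 ≠ blk r3 := by intro h; rw [h] at hblocks; simp at hblocks
  have hd12 : blk c1 ≠ blk c2 := by intro h; rw [h] at hblocks; simp at hblocks
  have hd13 : blk c1 ≠ blk c3 := by intro h; rw [h] at hblocks; simp at hblocks
  have hd23 : blk c2 ≠ blk c3 := by intro h; rw [h] at hblocks; simp at hblocks
  refine ⟨key1, ?_⟩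
  intro S' hS'
  have hΔ : (S' (blk r1) (blk c2) + S (blk r1) (blk c2)) +
      (S' (blk r2) (blk c3) + S (blk r2) (blk c3)) +
      (S' (blk r3) (blk c1) + S (blk r3) (blk c1)) +
      (S' (blk r2) (blk c1) + S (blk r2) (blk c1)) +
      (S' (blk r3) (blk c2) + S (blk r3) (blk c2)) +
      (S' (blk r1) (blk c3) + S (blk r1) (blk c3)) = 0 := by
    linear_combination hS' + key1
  obtain ⟨d1, d2, d3, e1', e2', e3', g12, g23, g31, g21, g32, g13⟩ :=
    sixsolve _ _ _ _ _ _ hΔ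
  set r1' := mkF (blk r1) ((r1.val : ZMod 2) + d1) with hr1'
  set r2' := mkF (blk r2) ((r2.val : ZMod 2) + d2) with hr2'
  set r3' := mkF (blk r3) ((r3.val : ZMod 2) + d3) with hr3'
  set c1' := mkF (blk c1) ((c1.val : ZMod 2) + e1') with hc1'
  set c2' := mkF (blk c2) ((c2.val : ZMod 2) + e2') with hc2'
  set c3' := mkF (blk c3) ((c3.val : ZMod 2) + e3') with hc3'
  have hbr1 : blk r1' = blk r1 := blk_mk _ _
  have hbr2 : blk r2' = blk r2 := blk_mk _ _
  have hbr3 : blk r3' = blk r3 := blk_mk _ _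
  have hbc1 : blk c1' = blk c1 := blk_mk _ _
  have hbc2 : blk c2' = blk c2 := blk_mk _ _
  have hbc3 : blk c3' = blk c3 := blk_mk _ _
  have q12 : comb A0 A1 S' r1' c2' = comb A0 A1 S r1 c2 :=
    comb_congr A0 A1 S S' hbr1 hbc2
      (by rw [val_mk, val_mk]; exact cellEq _ _ _ _ _ _ g12)
  have q21 : comb A0 A1 S' r2' c1' = comb A0 A1 S r2 c1 :=
    comb_congr A0 A1 S S' hbr2 hbc1
      (by rw [val_mk, val_mk]; exact cellEq _ _ _ _ _ _ g21)
  have q23 : comb A0 A1 S' r2' c3' = comb A0 A1 S r2 c3 :=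
    comb_congr A0 A1 S S' hbr2 hbc3
      (by rw [val_mk, val_mk]; exact cellEq _ _ _ _ _ _ g23)
  have q32 : comb A0 A1 S' r3' c2' = comb A0 A1 S r3 c2 :=
    comb_congr A0 A1 S S' hbr3 hbc2
      (by rw [val_mk, val_mk]; exact cellEq _ _ _ _ _ _ g32)
  have q31 : comb A0 A1 S' r3' c1' = comb A0 A1 S r3 c1 :=
    comb_congr A0 A1 S S' hbr3 hbc1
      (by rw [val_mk, val_mk]; exact cellEq _ _ _ _ _ _ g31)
  have q13 : comb A0 A1 S' r1' c3' = comb A0 A1 S r1 c3 :=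
    comb_congr A0 A1 S S' hbr1 hbc3
      (by rw [val_mk, val_mk]; exact cellEq _ _ _ _ _ _ g13)
  refine ⟨r1', r2', r3', c1', c2', c3', hbr1, hbr2, hbr3, hbc1, hbc2, hbc3,
    ?_, ?_, ?_, ?_, ?_, ?_,
    q12.trans (h1.trans q21.symm),
    q23.trans (h2.trans q32.symm),
    q31.trans (h3.trans q13.symm)⟩
  · intro h; exact hb12 (by rw [← hbr1, ← hbr2, h])
  · intro h; exact hb13 (by rw [← hbr1, ← hbr3, h])
  · intro h; exact hb23 (by rw [← hbr2, ← hbr3, h])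
  · intro h; exact hd12 (by rw [← hbc1, ← hbc2, h])
  · intro h; exact hd13 (by rw [← hbc1, ← hbc3, h])
  · intro h; exact hd23 (by rw [← hbc2, ← hbc3, h])
end
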